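/- arXiv:1311.3867 — 4 statements merged into one kernel-verified Lean document; each statement's English description precedes it below -/
import Mathlib

section
/- Let G^{1/m} be the m-fold subdivision of a graph G with n ≥ 3 vertices, and let a be an original vertex. A vertex z inside a thread x⋯y with x,y ≠ a is equidistant from the vertices at distance 1 from a on all threads a⋯v with v ∉ {x,y}; in particular such a probe distinguishes at most the two threads a⋯x and a⋯y among threads leaving a. -/
/-- Vertex type of the `m`-fold subdivision of `G`: original vertices (`Sum.inl`)
together with, for each edge `uv` of `G` (represented with `u < v`), internal
vertices `Sum.inr ⟨(u, v, i), _⟩`; the internal vertex with index `i : Fin (m-1)`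
is the one at distance `i + 1` from `u` along the thread replacing `uv`. -/
def SubdivVert {V : Type*} [LT V] (G : SimpleGraph V) (m : ℕ) : Type _ :=
  V ⊕ {p : V × V × Fin (m - 1) // p.1 < p.2.1 ∧ G.Adj p.1 p.2.1}

/-- One-sided adjacency relation generating the `m`-fold subdivision of `G`. -/
def SubdivRel {V : Type*} [LT V] (G : SimpleGraph V) (m : ℕ) :
    SubdivVert G m → SubdivVert G m → Prop
  | Sum.inl a, Sum.inl b => m = 1 ∧ G.Adj a b
  | Sum.inl a, Sum.inr p =>
      (a = p.1.1 ∧ (p.1.2.2 : ℕ) = 0) ∨ (a = p.1.2.1 ∧ (p.1.2.2 : ℕ) + 2 = m)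
  | Sum.inr _, Sum.inl _ => False
  | Sum.inr p, Sum.inr q =>
      p.1.1 = q.1.1 ∧ p.1.2.1 = q.1.2.1 ∧ (p.1.2.2 : ℕ) + 1 = (q.1.2.2 : ℕ)

/-- The `m`-fold subdivision `G^{1/m}` of `G`: each edge of `G` is replaced by a
path of length `m` through `m - 1` new internal vertices. -/
def Subdiv {V : Type*} [LT V] (G : SimpleGraph V) (m : ℕ) :
    SimpleGraph (SubdivVert G m) :=
  SimpleGraph.fromRel (SubdivRel G m)


/-- In `K_n^{1/m}` (`m ≥ 2`), the vertex at distance 1 from the original vertex `a`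
on the thread `a ⋯ v` (for `v ≠ a`). -/
def nbrOnThread (n m : ℕ) (hm : 2 ≤ m) (a v : Fin n) (hav : a ≠ v) :
    SubdivVert (SimpleGraph.completeGraph (Fin n)) m :=
  if h : a < v then
    Sum.inr ⟨(a, v, ⟨0, by omega⟩), h, by simpa [SimpleGraph.completeGraph] using hav⟩
  else
    Sum.inr ⟨(v, a, ⟨m - 2, by omega⟩), (hav.lt_or_gt).resolve_left h,
      by simpa [SimpleGraph.completeGraph] using hav.symm⟩

section Aux

/-- Reversed internal index along a thread. -/
def revIdx (m : ℕ) (i : Fin (m - 1)) : Fin (m - 1) :=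
  ⟨m - 2 - (i : ℕ), by have := i.isLt; omega⟩

/-- The map on subdivision vertices induced by a permutation of `Fin n`. -/
def pmap (n m : ℕ) (σ : Equiv.Perm (Fin n)) :
    SubdivVert (SimpleGraph.completeGraph (Fin n)) m → SubdivVert (SimpleGraph.completeGraph (Fin n)) m
  | Sum.inl a => Sum.inl (σ a)
  | Sum.inr ⟨(u, w, i), h⟩ =>
      if hlt : σ u < σ w then
        Sum.inr ⟨(σ u, σ w, i), hlt, by simpa [SimpleGraph.completeGraph] using hlt.ne⟩
      else
        Sum.inr ⟨(σ w, σ u, revIdx m i),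
          lt_of_le_of_ne (not_lt.mp hlt)
            (fun e => h.1.ne (σ.injective e).symm),
          by
            simp only [SimpleGraph.completeGraph, SimpleGraph.top_adj]
            exact fun e => h.1.ne (σ.injective e).symm⟩

lemma pmap_pmap (n m : ℕ) (σ τ : Equiv.Perm (Fin n))
    (x : SubdivVert (SimpleGraph.completeGraph (Fin n)) m) :
    pmap n m σ (pmap n m τ x) = pmap n m (σ * τ) x := by
  obtain a | ⟨⟨u, w, i⟩, h⟩ := x
  · simp [pmap]; rfl
  · have hiw := i.isLt
    have hne1 : τ u ≠ τ w := fun e => h.1.ne (τ.injective e)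
    have hne2 : σ (τ u) ≠ σ (τ w) := fun e => hne1 (σ.injective e)
    rcases lt_or_gt_of_ne hne1 with h1 | h1 <;> rcases lt_or_gt_of_ne hne2 with h2 | h2 <;>
      simp [pmap, h1, h2, h1.asymm, h2.asymm, revIdx, Fin.ext_iff, Equiv.Perm.mul_apply] <;>
        exact congrArg Sum.inr (Subtype.ext (by simp [Prod.ext_iff, Fin.ext_iff] <;> omega))

lemma pmap_one (n m : ℕ) (x : SubdivVert (SimpleGraph.completeGraph (Fin n)) m) :
    pmap n m 1 x = x := by
  obtain a | ⟨⟨u, w, i⟩, h⟩ := x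
  · simp [pmap]; rfl
  · simp [pmap, h.1]; rfl

/-- The equivalence on subdivision vertices induced by a permutation. -/
def pEquiv (n m : ℕ) (σ : Equiv.Perm (Fin n)) :
    SubdivVert (SimpleGraph.completeGraph (Fin n)) m ≃ SubdivVert (SimpleGraph.completeGraph (Fin n)) m where
  toFun := pmap n m σ
  invFun := pmap n m σ⁻¹
  left_inv x := by rw [pmap_pmap, inv_mul_cancel, pmap_one]
  right_inv x := by rw [pmap_pmap, mul_inv_cancel, pmap_one]

@[simp] lemma revIdx_val (m : ℕ) (i : Fin (m - 1)) : (revIdx m i : ℕ) = m - 2 - i := rfl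

lemma adj_pmap (n m : ℕ) (σ : Equiv.Perm (Fin n))
    {x y : SubdivVert (SimpleGraph.completeGraph (Fin n)) m}
    (hxy : (Subdiv (SimpleGraph.completeGraph (Fin n)) m).Adj x y) :
    (Subdiv (SimpleGraph.completeGraph (Fin n)) m).Adj (pmap n m σ x) (pmap n m σ y) := by
  obtain ⟨hne, hrel⟩ := hxy
  refine ⟨fun e => hne ((pEquiv n m σ).injective e), ?_⟩
  obtain a | ⟨⟨u, w, i⟩, h⟩ := x <;> obtain b | ⟨⟨u', w', i'⟩, h'⟩ := y
  · rcases hrel with ⟨h1, h2⟩ | ⟨h1, h2⟩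
    · exact Or.inl ⟨h1, by simpa [SimpleGraph.completeGraph] using σ.injective.ne h2.ne⟩
    · exact Or.inr ⟨h1, by simpa [SimpleGraph.completeGraph] using σ.injective.ne h2.ne⟩
  · have hi := i'.isLt
    have hrel' : (a = u' ∧ (i' : ℕ) = 0) ∨ (a = w' ∧ (i' : ℕ) + 2 = m) := by
      rcases hrel with hrel | hrel
      · exact hrel
      · exact absurd hrel (by simp [SubdivRel])
    left
    by_cases hlt : σ u' < σ w'
    · simp only [pmap, hlt, ↓reduceDIte]
      rcases hrel' with ⟨rfl, h2⟩ | ⟨rfl, h2⟩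
      · exact Or.inl ⟨rfl, h2⟩
      · exact Or.inr ⟨rfl, h2⟩
    · simp only [pmap, hlt, ↓reduceDIte]
      rcases hrel' with ⟨rfl, h2⟩ | ⟨rfl, h2⟩
      · exact Or.inr ⟨rfl, by simp; omega⟩
      · exact Or.inl ⟨rfl, by simp; omega⟩
  · have hi := i.isLt
    have hrel' : (b = u ∧ (i : ℕ) = 0) ∨ (b = w ∧ (i : ℕ) + 2 = m) := by
      rcases hrel with hrel | hrel
      · exact absurd hrel (by simp [SubdivRel])
      · exact hrel
    right
    by_cases hlt : σ u < σ w
    · simp only [pmap, hlt, ↓reduceDIte]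
      rcases hrel' with ⟨rfl, h2⟩ | ⟨rfl, h2⟩
      · exact Or.inl ⟨rfl, h2⟩
      · exact Or.inr ⟨rfl, h2⟩
    · simp only [pmap, hlt, ↓reduceDIte]
      rcases hrel' with ⟨rfl, h2⟩ | ⟨rfl, h2⟩
      · exact Or.inr ⟨rfl, by simp; omega⟩
      · exact Or.inl ⟨rfl, by simp; omega⟩
  · have hi := i.isLt
    have hi' := i'.isLt
    have huw : u = u' ∧ w = w' := by
      rcases hrel with ⟨h1, h2, _⟩ | ⟨h1, h2, _⟩ <;> exact ⟨by simp_all, by simp_all⟩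
    obtain ⟨rfl, rfl⟩ := huw
    have hij : (i : ℕ) + 1 = i' ∨ (i' : ℕ) + 1 = i := by
      rcases hrel with ⟨_, _, h3⟩ | ⟨_, _, h3⟩ <;> simp_all
    by_cases hlt : σ u < σ w
    · simp only [pmap, hlt, ↓reduceDIte]
      rcases hij with h3 | h3
      · exact Or.inl ⟨rfl, rfl, h3⟩
      · exact Or.inr ⟨rfl, rfl, h3⟩
    · simp only [pmap, hlt, ↓reduceDIte]
      rcases hij with h3 | h3
      · exact Or.inr ⟨rfl, rfl, by simp; omega⟩
      · exact Or.inl ⟨rfl, rfl, by simp; omega⟩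

/-- The automorphism of `K_n^{1/m}` induced by a permutation of `Fin n`. -/
def pIso (n m : ℕ) (σ : Equiv.Perm (Fin n)) :
    Subdiv (SimpleGraph.completeGraph (Fin n)) m ≃g Subdiv (SimpleGraph.completeGraph (Fin n)) m where
  toEquiv := pEquiv n m σ
  map_rel_iff' := by
    intro x y
    constructor
    · intro h
      have := adj_pmap n m σ⁻¹ h
      simpa [pEquiv, pmap_pmap, pmap_one] using this
    · exact adj_pmap n m σ

lemma iso_dist_le {V W : Type*} {G : SimpleGraph V} {H : SimpleGraph W}
    (e : G ≃g H) (u v : V) : H.dist (e u) (e v) ≤ G.dist u v := by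
  by_cases h : G.Reachable u v
  · obtain ⟨p, hp⟩ := h.exists_walk_length_eq_dist
    calc H.dist (e u) (e v) ≤ (p.map e.toHom).length := SimpleGraph.dist_le _
      _ = G.dist u v := by rw [SimpleGraph.Walk.length_map, hp]
  · rw [SimpleGraph.dist_eq_zero_of_not_reachable h,
      SimpleGraph.dist_eq_zero_of_not_reachable
        (fun hr => h (by simpa using hr.map e.symm.toHom))]

lemma iso_dist {V W : Type*} {G : SimpleGraph V} {H : SimpleGraph W}
    (e : G ≃g H) (u v : V) : H.dist (e u) (e v) = G.dist u v :=
  le_antisymm (iso_dist_le e u v)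
    (by simpa using iso_dist_le e.symm (e u) (e v))

end Aux

/-- In `K_n^{1/m}`, a vertex `z` strictly inside a thread `x ⋯ y` with `x, y ≠ a` is
equidistant from the vertices at distance 1 from `a` on the threads `a ⋯ v` and
`a ⋯ v'` whenever `v, v' ∉ {x, y, a}`. -/
theorem probe_inside_thread_equidistant (n m : ℕ) (hn : 3 ≤ n) (hm : 2 ≤ m)
    (a x y v v' : Fin n) (hxy : x < y) (hax : a ≠ x) (hay : a ≠ y)
    (hvx : v ≠ x) (hvy : v ≠ y) (hva : v ≠ a)
    (hv'x : v' ≠ x) (hv'y : v' ≠ y) (hv'a : v' ≠ a)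
    (j : Fin (m - 1))
    (z : SubdivVert (SimpleGraph.completeGraph (Fin n)) m)
    (hz : z = Sum.inr ⟨(x, y, j), hxy, by simpa [SimpleGraph.completeGraph] using hxy.ne⟩) :
    (Subdiv (SimpleGraph.completeGraph (Fin n)) m).dist z (nbrOnThread n m hm a v hva.symm) =
      (Subdiv (SimpleGraph.completeGraph (Fin n)) m).dist z (nbrOnThread n m hm a v' hv'a.symm) := by
  set σ : Equiv.Perm (Fin n) := Equiv.swap v v' with hσ
  have hsx : σ x = x := Equiv.swap_apply_of_ne_of_ne hvx.symm hv'x.symm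
  have hsy : σ y = y := Equiv.swap_apply_of_ne_of_ne hvy.symm hv'y.symm
  have hsa : σ a = a := Equiv.swap_apply_of_ne_of_ne hva.symm hv'a.symm
  have hsv : σ v = v' := Equiv.swap_apply_left v v'
  have key := iso_dist (pIso n m σ) z (nbrOnThread n m hm a v hva.symm)
  have e1 : (pIso n m σ) z = z := by
    subst hz
    simp [pIso, pEquiv, pmap, hsx, hsy, hxy]
    rfl
  have e2 : (pIso n m σ) (nbrOnThread n m hm a v hva.symm)
      = nbrOnThread n m hm a v' hv'a.symm := by
    rcases lt_or_gt_of_ne hva with h1 | h1 <;> rcases lt_or_gt_of_ne hv'a with h2 | h2 <;>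
      simp [pIso, pEquiv, nbrOnThread, pmap, hsa, hsv, h1, h2, h1.asymm, h2.asymm,
        revIdx, Fin.ext_iff] <;> rfl
  rw [e1, e2] at key
  exact key.symm
end

section
/- In K_{a,b}^{1/m}, for any vertex z the number of vertices of B whose distance to z differs from the common distance of the rest of B to z is at most 1; equivalently, all but at most one vertex of B are at the same distance from z. -/
/-- The complete bipartite graph `K_{a,b}`, on vertex set `Fin (a + b)`.
The part `A` consists of the vertices with value `< a`, and the part `B` of
those with value `≥ a`. -/
def CompBip (a b : ℕ) : SimpleGraph (Fin (a + b)) :=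
  SimpleGraph.fromRel fun i j => i.val < a ∧ a ≤ j.val

lemma compBip_adj {a b : ℕ} {x y : Fin (a + b)} (hx : x.val < a) (hy : a ≤ y.val) :
    (CompBip a b).Adj x y := by
  simp only [CompBip, SimpleGraph.fromRel_adj]
  exact ⟨fun h => by subst h; omega, Or.inl ⟨hx, hy⟩⟩

lemma compBip_lt {a b : ℕ} {x y : Fin (a + b)} (hx : x.val < a) (hy : a ≤ y.val) :
    x < y := by
  rw [Fin.lt_def]; omega


-- aux: adjacency with order gives parts
lemma compBip_parts {a b : ℕ} {x y : Fin (a + b)} (h : (CompBip a b).Adj x y)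
    (hxy : x < y) : x.val < a ∧ a ≤ y.val := by
  simp only [CompBip, SimpleGraph.fromRel_adj] at h
  rw [Fin.lt_def] at hxy
  omega

section Perm
variable {a b m : ℕ} (σ : Equiv.Perm (Fin (a + b)))
  (hA : ∀ x : Fin (a + b), x.val < a → σ x = x)
  (hB : ∀ x : Fin (a + b), a ≤ x.val → a ≤ (σ x).val)

include hA hB in
lemma perm_adj {x y : Fin (a + b)} (h : (CompBip a b).Adj x y) :
    (CompBip a b).Adj (σ x) (σ y) := by
  simp only [CompBip, SimpleGraph.fromRel_adj] at h
  obtain ⟨hne, h | h⟩ := h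
  · rw [hA x h.1]; exact compBip_adj h.1 (hB y h.2)
  · rw [hA y h.1]; exact (compBip_adj h.1 (hB x h.2)).symm

/-- The map on subdivision vertices induced by a part-preserving permutation. -/
def permVert : SubdivVert (CompBip a b) m → SubdivVert (CompBip a b) m
  | Sum.inl u => Sum.inl (σ u)
  | Sum.inr ⟨(u, v, i), h⟩ => Sum.inr ⟨(σ u, σ v, i), by
      obtain ⟨hu, hv⟩ := compBip_parts h.2 h.1
      rw [hA u hu]
      exact ⟨compBip_lt hu (hB v hv), compBip_adj hu (hB v hv)⟩⟩

include hA hB in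
lemma permVert_rel {p q : SubdivVert (CompBip a b) m} (h : SubdivRel (CompBip a b) m p q) :
    SubdivRel (CompBip a b) m (permVert σ hA hB p) (permVert σ hA hB q) := by
  match p, q with
  | Sum.inl x, Sum.inl y => exact ⟨h.1, perm_adj σ hA hB h.2⟩
  | Sum.inl x, Sum.inr ⟨(u, v, i), hp⟩ =>
      rcases h with ⟨h1, h2⟩ | ⟨h1, h2⟩
      · exact Or.inl ⟨congrArg σ h1, h2⟩
      · exact Or.inr ⟨congrArg σ h1, h2⟩
  | Sum.inr _, Sum.inl _ => exact h.elim
  | Sum.inr ⟨(u, v, i), hp⟩, Sum.inr ⟨(u', v', i'), hq⟩ =>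
      exact ⟨congrArg σ h.1, congrArg σ h.2.1, h.2.2⟩

include hA hB in
lemma perm_inv_hA : ∀ x : Fin (a + b), x.val < a → σ⁻¹ x = x := by
  intro x hx
  have := hA x hx
  conv_lhs => rw [← this]
  simp

include hA hB in
lemma perm_inv_hB : ∀ x : Fin (a + b), a ≤ x.val → a ≤ (σ⁻¹ x).val := by
  intro x hx
  by_contra h
  push_neg at h
  have := hA _ h
  simp at this
  simp only [Equiv.Perm.inv_def] at h
  omega

include hA hB in
lemma permVert_inv_comp :
    Function.LeftInverse (permVert σ⁻¹ (perm_inv_hA σ hA hB) (perm_inv_hB σ hA hB))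
      (permVert σ hA hB (m := m)) := by
  intro p
  match p with
  | Sum.inl x => simp [permVert]; rfl
  | Sum.inr ⟨(u, v, i), hp⟩ => simp [permVert]; rfl

/-- The graph homomorphism on the subdivision induced by a part-preserving permutation. -/
def permHom : Subdiv (CompBip a b) m →g Subdiv (CompBip a b) m where
  toFun := permVert σ hA hB
  map_rel' := by
    intro p q hpq
    rw [Subdiv, SimpleGraph.fromRel_adj] at hpq ⊢
    refine ⟨fun h => hpq.1 ((permVert_inv_comp σ hA hB).injective h), ?_⟩
    rcases hpq.2 with h | h
    · exact Or.inl (permVert_rel σ hA hB h)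
    · exact Or.inr (permVert_rel σ hA hB h)

include hA hB in
lemma permVert_dist (p q : SubdivVert (CompBip a b) m) :
    (Subdiv (CompBip a b) m).dist (permVert σ hA hB p) (permVert σ hA hB q) =
      (Subdiv (CompBip a b) m).dist p q := by
  set G := Subdiv (CompBip a b) m
  set F := permHom σ hA hB (m := m)
  set F' := permHom σ⁻¹ (perm_inv_hA σ hA hB) (perm_inv_hB σ hA hB) (m := m)
  have hFF' : ∀ r, F' (F r) = r := permVert_inv_comp σ hA hB
  by_cases hr : G.Reachable p q
  · refine le_antisymm ?_ ?_
    · obtain ⟨wk, hwk⟩ := hr.exists_walk_length_eq_dist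
      calc G.dist (F p) (F q) ≤ (wk.map F).length := SimpleGraph.dist_le _
        _ = G.dist p q := by rw [SimpleGraph.Walk.length_map, hwk]
    · have hr' : G.Reachable (F p) (F q) := by
        obtain ⟨wk⟩ := hr
        exact ⟨wk.map F⟩
      obtain ⟨wk, hwk⟩ := hr'.exists_walk_length_eq_dist
      calc G.dist p q ≤ ((wk.map F').copy (hFF' p) (hFF' q)).length := SimpleGraph.dist_le _
        _ = G.dist (F p) (F q) := by
          rw [SimpleGraph.Walk.length_copy, SimpleGraph.Walk.length_map, hwk]
  · have hr' : ¬ G.Reachable (F p) (F q) := by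
      intro ⟨wk⟩
      exact hr ⟨(wk.map F').copy (hFF' p) (hFF' q)⟩
    have h2 := SimpleGraph.dist_eq_zero_of_not_reachable hr'
    rw [SimpleGraph.dist_eq_zero_of_not_reachable hr]
    exact h2

end Perm

lemma compBipSwapDist {a b m : ℕ} (z : SubdivVert (CompBip a b) m) (w v₁ v₂ : Fin (a + b))
    (hv₁ : a ≤ v₁.val) (hv₂ : a ≤ v₂.val) (h₁ : v₁ ≠ w) (h₂ : v₂ ≠ w)
    (hz : z = Sum.inl w ∨ ∃ (u : Fin (a + b)) (i : Fin (m - 1))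
      (h : u < w ∧ (CompBip a b).Adj u w), z = Sum.inr ⟨(u, w, i), h⟩) :
    (Subdiv (CompBip a b) m).dist z (Sum.inl v₁) =
      (Subdiv (CompBip a b) m).dist z (Sum.inl v₂) := by
  set σ : Equiv.Perm (Fin (a + b)) := Equiv.swap v₁ v₂ with hσ
  have hA : ∀ x : Fin (a + b), x.val < a → σ x = x := by
    intro x hx
    refine Equiv.swap_apply_of_ne_of_ne ?_ ?_ <;> rintro rfl <;> omega
  have hB : ∀ x : Fin (a + b), a ≤ x.val → a ≤ (σ x).val := by
    intro x hx
    rcases eq_or_ne x v₁ with rfl | hx1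
    · rw [hσ, Equiv.swap_apply_left]; exact hv₂
    rcases eq_or_ne x v₂ with rfl | hx2
    · rw [hσ, Equiv.swap_apply_right]; exact hv₁
    · rw [hσ, Equiv.swap_apply_of_ne_of_ne hx1 hx2]; exact hx
  have hd := permVert_dist σ hA hB z (Sum.inl v₁)
  have hz' : permVert σ hA hB z = z := by
    rcases hz with rfl | ⟨u, i, h, rfl⟩
    · show Sum.inl (σ w) = Sum.inl w
      rw [hσ, Equiv.swap_apply_of_ne_of_ne (Ne.symm h₁) (Ne.symm h₂)]
    · have hu := (compBip_parts h.2 h.1).1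
      show Sum.inr _ = Sum.inr _
      congr 1
      apply Subtype.ext
      show (σ u, σ w, i) = (u, w, i)
      rw [hA u hu, hσ, Equiv.swap_apply_of_ne_of_ne (Ne.symm h₁) (Ne.symm h₂)]
  have hv : permVert σ hA hB (Sum.inl v₁ : SubdivVert (CompBip a b) m) = Sum.inl v₂ := by
    show Sum.inl (σ v₁) = Sum.inl v₂
    rw [hσ, Equiv.swap_apply_left]
  rw [hz', hv] at hd
  exact hd.symm

lemma main_aux {a b m : ℕ} (ha : 2 ≤ a) (hb : 3 ≤ b)
    (z : SubdivVert (CompBip a b) m) (w : Fin (a + b))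
    (hz : z = Sum.inl w ∨ ∃ (u : Fin (a + b)) (i : Fin (m - 1))
      (h : u < w ∧ (CompBip a b).Adj u w), z = Sum.inr ⟨(u, w, i), h⟩) :
    ∃ (d : ℕ) (w' : Fin (a + b)), ∀ v : Fin (a + b), a ≤ v.val → v ≠ w' →
      (Subdiv (CompBip a b) m).dist z (Sum.inl v) = d := by
  have hab0 : a < a + b := by omega
  have hab1 : a + 1 < a + b := by omega
  set c0 : Fin (a + b) := ⟨a, hab0⟩
  set c1 : Fin (a + b) := ⟨a + 1, hab1⟩
  by_cases h : c0 = w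
  · refine ⟨(Subdiv (CompBip a b) m).dist z (Sum.inl c1), w, fun v hv hvw => ?_⟩
    refine compBipSwapDist z w v c1 hv (by simp [c1]) hvw ?_ hz
    rw [← h]; intro he
    have := congrArg Fin.val he
    simp [c0, c1] at this
  · refine ⟨(Subdiv (CompBip a b) m).dist z (Sum.inl c0), w, fun v hv hvw => ?_⟩
    exact compBipSwapDist z w v c0 hv (by simp [c0]) hvw h hz

/-- In `K_{a,b}^{1/m}` (with `a ≥ 2`, `b ≥ 3`, `m ≥ 1`), for any vertex `z` all but
at most one of the original vertices of `B` are at the same distance from `z`. -/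
theorem compBip_subdiv_all_but_one_equidistant (a b m : ℕ)
    (ha : 2 ≤ a) (hb : 3 ≤ b) (hm : 1 ≤ m)
    (z : SubdivVert (CompBip a b) m) :
    ∃ (d : ℕ) (w : Fin (a + b)), ∀ v : Fin (a + b), a ≤ v.val → v ≠ w →
      (Subdiv (CompBip a b) m).dist z (Sum.inl v) = d := by
  rcases z with u | ⟨⟨u, y, i⟩, hp⟩
  · exact main_aux ha hb _ u (Or.inl rfl)
  · exact main_aux ha hb _ y (Or.inr ⟨u, i, hp, rfl⟩)
end

section
/- The robber wins the robber-locating game on any connected bipartite graph of girth 6. -/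
/-- A valid robber trajectory: `r t` is the robber's position at the time of the
cop's `t`-th probe; between consecutive probes the robber stays put or moves along
an edge. -/
def ValidTraj {V : Type*} (G : SimpleGraph V) (r : ℕ → V) : Prop :=
  ∀ t, r (t + 1) = r t ∨ G.Adj (r t) (r (t + 1))

/-- Given a cop strategy `c` (choosing the next probed vertex from the list of
distance responses received so far) and a robber trajectory `r`, `resps G c r t`
is the list of the first `t` distance responses. -/
noncomputable def resps {V : Type*} (G : SimpleGraph V) (c : List ℕ → V) (r : ℕ → V) : ℕ → List ℕ
  | 0 => []
  | t + 1 => resps G c r t ++ [G.dist (c (resps G c r t)) (r t)]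

/-- A graph is locatable if the cop has a strategy which, within a bounded number
of probes, determines the robber's current position: after some probe `t`, every
valid trajectory producing the same responses is at the same vertex at time `t`. -/
def Locatable {V : Type*} (G : SimpleGraph V) : Prop :=
  ∃ (c : List ℕ → V) (T : ℕ), ∀ r : ℕ → V, ValidTraj G r →
    ∃ t ≤ T, ∀ r' : ℕ → V, ValidTraj G r' →
      resps G c r' (t + 1) = resps G c r (t + 1) → r' t = r t

open SimpleGraph

section aux
variable {V : Type*} {G : SimpleGraph V}

lemma fin2_helper : ∀ a b c : Fin 2, a ≠ b → (a = c ↔ ¬ b = c) := by decide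

lemma fin2_helper' : ∀ a b c : Fin 2, b ≠ c → (a = b ↔ ¬ a = c) := by decide

lemma walk_parity (C : G.Coloring (Fin 2)) {x y : V} (p : G.Walk x y) :
    (C x = C y ↔ Even p.length) := by
  induction p with
  | nil => simp
  | @cons u a y h p ih =>
    rw [Walk.length_cons, Nat.even_add_one, ← ih]
    exact fin2_helper _ _ _ (C.valid h)

lemma dist_parity (hc : G.Connected) (C : G.Coloring (Fin 2)) (x y : V) :
    (C x = C y ↔ Even (G.dist x y)) := by
  obtain ⟨p, hp⟩ := hc.exists_walk_length_eq_dist x y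
  rw [← hp]; exact walk_parity C p

lemma adj_dist_step (hc : G.Connected) (C : G.Coloring (Fin 2)) {u w : V} (h : G.Adj u w)
    (x : V) : G.dist x w = G.dist x u + 1 ∨ G.dist x u = G.dist x w + 1 := by
  have h1 : G.dist x w ≤ G.dist x u + 1 := by
    have := hc.dist_triangle (u := x) (v := u) (w := w)
    rwa [dist_eq_one_iff_adj.mpr h] at this
  have h2 : G.dist x u ≤ G.dist x w + 1 := by
    have := hc.dist_triangle (u := x) (v := w) (w := u)
    rwa [dist_eq_one_iff_adj.mpr h.symm] at this
  have hpar : Even (G.dist x u) ↔ ¬ Even (G.dist x w) := by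
    rw [← dist_parity hc C x u, ← dist_parity hc C x w]
    exact fin2_helper' _ _ _ (C.valid h)
  rw [Nat.even_iff, Nat.even_iff] at hpar
  omega

lemma exists_center (hc : G.Connected) (C : G.Coloring (Fin 2)) (v : ZMod 6 → V)
    (hadj : ∀ i, G.Adj (v i) (v (i + 1))) (x : V) (m : ZMod 6) :
    ∃ m' : ZMod 6, (m' = m - 1 ∨ m' = m ∨ m' = m + 1) ∧
      G.dist x (v (m' - 1)) = G.dist x (v (m' + 1)) := by
  by_contra hcon
  push_neg at hcon
  have hstep : ∀ j : ZMod 6, G.dist x (v (j + 1)) = G.dist x (v j) + 1 ∨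
      G.dist x (v j) = G.dist x (v (j + 1)) + 1 := fun j => adj_dist_step hc C (hadj j) x
  have e1 := hstep (m - 2); have e2 := hstep (m - 1); have e3 := hstep m
  have e4 := hstep (m + 1); have e5 := hstep (m + 2); have e6 := hstep (m + 3)
  have ne1 := hcon (m - 1) (Or.inl rfl)
  have ne2 := hcon m (Or.inr (Or.inl rfl))
  have ne3 := hcon (m + 1) (Or.inr (Or.inr rfl))
  have c6 : (6 : ZMod 6) = 0 := by decide
  rw [show m - 2 + 1 = m - 1 from by ring] at e1
  rw [show m - 1 + 1 = m from by ring] at e2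
  rw [show m + 1 + 1 = m + 2 from by ring] at e4
  rw [show m + 2 + 1 = m + 3 from by ring] at e5
  rw [show m + 3 + 1 = m - 2 from by linear_combination c6] at e6
  rw [show m - 1 - 1 = m - 2 from by ring, show m - 1 + 1 = m from by ring] at ne1
  rw [show m + 1 - 1 = m from by ring, show m + 1 + 1 = m + 2 from by ring] at ne3
  omega

lemma getVert_support_get {u w : V} (p : G.Walk u w) {i : ℕ} (h : i ≤ p.length) :
    p.support[i]? = some (p.getVert i) := by
  induction p generalizing i with
  | nil =>
    simp only [Walk.length_nil, Nat.le_zero] at h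
    subst h; simp
  | cons h' p ih =>
    cases i with
    | zero => simp
    | succ i =>
      rw [Walk.support_cons, List.getElem?_cons_succ, Walk.getVert_cons_succ]
      exact ih (by simpa [Nat.succ_le_succ_iff] using h)

lemma cycle_to_fun {a : V} (w : G.Walk a a) (hcyc : w.IsCycle) (hlen : w.length = 6) :
    ∃ v : ZMod 6 → V, Function.Injective v ∧ ∀ i, G.Adj (v i) (v (i + 1)) := by
  refine ⟨fun i => w.getVert i.val, ?_, ?_⟩
  · intro i j hij
    have htn : w.support.tail.Nodup := hcyc.support_nodup
    have htl : w.support.tail.length = 6 := by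
      rw [List.length_tail, Walk.length_support, hlen]
    have claim : ∀ i : ZMod 6, w.support.tail[(i.val + 5) % 6]? = some (w.getVert i.val) := by
      intro i
      have hv : i.val < 6 := i.val_lt
      rw [List.getElem?_tail]
      by_cases h0 : i.val = 0
      · rw [h0]
        have : w.support[(5 + 1 : ℕ)]? = some (w.getVert 6) :=
          getVert_support_get w (by rw [hlen])
        rw [show (0 + 5) % 6 + 1 = 5 + 1 from rfl, this,
          show w.getVert 6 = a from by rw [← hlen]; exact w.getVert_length, w.getVert_zero]
      · rw [show (i.val + 5) % 6 + 1 = i.val from by omega]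
        exact getVert_support_get w (by omega)
    have hij' : w.getVert i.val = w.getVert j.val := hij
    have h1 : w.support.tail[(i.val + 5) % 6]? = w.support.tail[(j.val + 5) % 6]? := by
      rw [claim i, claim j, hij']
    have h2 := (List.getElem?_inj (i := (i.val + 5) % 6) (by rw [htl]; omega) htn).mp h1
    have : i.val = j.val := by have := i.val_lt; have := j.val_lt; omega
    exact ZMod.val_injective 6 this
  · intro i
    have hv : i.val < 6 := i.val_lt
    have hval : (i + 1).val = (i.val + 1) % 6 := by
      rw [ZMod.val_add]; rfl
    by_cases h5 : i.val = 5
    · have h6 : (i + 1).val = 0 := by rw [hval, h5]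
      show G.Adj (w.getVert i.val) (w.getVert (i + 1).val)
      rw [h5, h6, w.getVert_zero]
      have h7 : w.getVert 6 = a := by rw [← hlen]; exact w.getVert_length
      have h8 := w.adj_getVert_succ (i := 5) (by omega)
      rwa [h7] at h8
    · show G.Adj (w.getVert i.val) (w.getVert (i + 1).val)
      rw [hval, show (i.val + 1) % 6 = i.val + 1 from by omega]
      exact w.adj_getVert_succ (by omega)

lemma cycle_not_locatable (hc : G.Connected) (C : G.Coloring (Fin 2)) (v : ZMod 6 → V)
    (hinj : Function.Injective v) (hadj : ∀ i, G.Adj (v i) (v (i + 1))) :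
    ¬ Locatable G := by
  rintro ⟨c, T, hcop⟩
  choose pick hpick1 hpick2 using fun (x : V) (m : ZMod 6) => exists_center hc C v hadj x m
  let F : ℕ → ZMod 6 × List ℕ := fun n => Nat.rec (pick (c []) 0, [])
    (fun _ p => (pick (c (p.2 ++ [G.dist (c p.2) (v (p.1 - 1))])) p.1,
                 p.2 ++ [G.dist (c p.2) (v (p.1 - 1))])) n
  let m : ℕ → ZMod 6 := fun t => (F t).1
  let L : ℕ → List ℕ := fun t => (F t).2
  have hLs : ∀ t, L (t + 1) = L t ++ [G.dist (c (L t)) (v (m t - 1))] := fun t => rfl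
  have hinv : ∀ t, G.dist (c (L t)) (v (m t - 1)) = G.dist (c (L t)) (v (m t + 1)) := by
    intro t
    cases t with
    | zero => exact hpick2 (c []) 0
    | succ t => exact hpick2 (c (L (t + 1))) (m t)
  have hmove : ∀ t, m (t + 1) = m t - 1 ∨ m (t + 1) = m t ∨ m (t + 1) = m t + 1 :=
    fun t => hpick1 (c (L (t + 1))) (m t)
  have hvalid : ValidTraj G (fun t => v (m t - 1)) := by
    intro t
    show v (m (t + 1) - 1) = v (m t - 1) ∨ G.Adj (v (m t - 1)) (v (m (t + 1) - 1))
    rcases hmove t with h | h | h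
    · right
      rw [h, show m t - 1 - 1 = m t - 2 from by ring]
      have h2 := (hadj (m t - 2)).symm
      rwa [show m t - 2 + 1 = m t - 1 from by ring] at h2
    · left; rw [h]
    · right
      rw [h, show m t + 1 - 1 = m t from by ring]
      have h2 := hadj (m t - 1)
      rwa [show m t - 1 + 1 = m t from by ring] at h2
  have hvalid' : ValidTraj G (fun t => v (m t + 1)) := by
    intro t
    show v (m (t + 1) + 1) = v (m t + 1) ∨ G.Adj (v (m t + 1)) (v (m (t + 1) + 1))
    rcases hmove t with h | h | h
    · right
      rw [h, show m t - 1 + 1 = m t from by ring]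
      exact (hadj (m t)).symm
    · left; rw [h]
    · right
      rw [h, show m t + 1 + 1 = m t + 2 from by ring]
      have h2 := hadj (m t + 1)
      rwa [show m t + 1 + 1 = m t + 2 from by ring] at h2
  have hresps : ∀ t, resps G c (fun t => v (m t - 1)) t = L t ∧
      resps G c (fun t => v (m t + 1)) t = L t := by
    intro t
    induction t with
    | zero => exact ⟨rfl, rfl⟩
    | succ t ih =>
      constructor
      · show resps G c (fun t => v (m t - 1)) t ++ [_] = L (t + 1)
        rw [ih.1, hLs t]
      · show resps G c (fun t => v (m t + 1)) t ++
          [G.dist (c (resps G c (fun t => v (m t + 1)) t)) (v (m t + 1))] = L (t + 1)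
        rw [ih.2, hLs t, hinv t]
  obtain ⟨t, ht, hloc⟩ := hcop _ hvalid
  have heq := hloc _ hvalid' (by rw [(hresps (t + 1)).2, (hresps (t + 1)).1])
  have h1 : m t + 1 = m t - 1 := hinj heq
  have h2 : (2 : ZMod 6) = 0 := by linear_combination h1
  exact absurd h2 (by decide)

end aux

/-- The robber wins the robber-locating game on any connected bipartite graph of
girth 6: no such graph is locatable. -/
theorem bipartite_girth_six_not_locatable {V : Type*} (G : SimpleGraph V)
    (hc : G.Connected) (hb : G.Colorable 2) (hg : G.girth = 6) :
    ¬ Locatable G := by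
  obtain ⟨C⟩ := hb
  have hac : ¬ G.IsAcyclic := by
    intro h
    have := girth_eq_zero.mpr h
    omega
  obtain ⟨a, w, hcyc, hlen'⟩ := exists_girth_eq_length.mpr hac
  have hlen : w.length = 6 := by rw [← hlen', hg]
  obtain ⟨v, hinj, hadj⟩ := cycle_to_fun w hcyc hlen
  exact cycle_not_locatable hc C v hinj hadj
end

section
/- The cycle C6 is not locatable in the robber-locating game. -/
namespace C6NL

open SimpleGraph
open Fin.CommRing

abbrev C6 : SimpleGraph (Fin 6) := SimpleGraph.cycleGraph 6

/-- Reflection of `C₆` about the vertex `q`, as a graph homomorphism. -/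
def reflHom (q : Fin 6) : C6 →g C6 where
  toFun x := 2 * q - x
  map_rel' := by
    intro u v h
    rw [SimpleGraph.cycleGraph_adj] at h ⊢
    have h1 : (2*q - u) - (2*q - v) = v - u := by ring
    have h2 : (2*q - v) - (2*q - u) = u - v := by ring
    rw [h1, h2]
    tauto

lemma dist_refl_le (q u v : Fin 6) :
    C6.dist (2*q - u) (2*q - v) ≤ C6.dist u v := by
  obtain ⟨p, hp⟩ := (SimpleGraph.cycleGraph_connected (n := 5)).exists_walk_length_eq_dist u v
  calc C6.dist (2*q - u) (2*q - v) ≤ (p.map (reflHom q)).length := SimpleGraph.dist_le _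
    _ = p.length := p.length_map _
    _ = C6.dist u v := hp

lemma dist_refl (q u v : Fin 6) :
    C6.dist (2*q - u) (2*q - v) = C6.dist u v := by
  refine le_antisymm (dist_refl_le q u v) ?_
  have := dist_refl_le q (2*q - u) (2*q - v)
  have h1 : 2*q - (2*q - u) = u := by ring
  have h2 : 2*q - (2*q - v) = v := by ring
  rwa [h1, h2] at this

/-- Two vertices symmetric about `q` are equidistant from `q`. -/
lemma dist_symm_pt (q a : Fin 6) : C6.dist q (2*q - a) = C6.dist q a := by
  have := dist_refl q q a
  have h1 : 2*q - q = q := by ring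
  rwa [h1] at this

/-- The common move of the two phantom robbers when the probe moves from `p` to `q`. -/
def delta (p q : Fin 6) : Fin 6 :=
  if 2*(q-p) = 0 then 0 else if 2*(q-p) = 2 then 1 else -1

lemma delta_spec : ∀ p q : Fin 6,
    2 * delta p q = 2*(q-p) ∧ (delta p q = 0 ∨ delta p q = 1 ∨ delta p q = -1) := by decide

variable (c : List ℕ → Fin 6)

/-- The state at time `t`: the two phantom robber positions and the response list. -/
noncomputable def st : ℕ → Fin 6 × Fin 6 × List ℕ
  | 0 => (c [] + 1, c [] - 1, [])
  | t + 1 =>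
    let s := st t
    let L' := s.2.2 ++ [C6.dist (c s.2.2) s.1]
    let δ := delta (c s.2.2) (c L')
    (s.1 + δ, s.2.1 + δ, L')

noncomputable def A (t : ℕ) : Fin 6 := (st c t).1
noncomputable def B (t : ℕ) : Fin 6 := (st c t).2.1
noncomputable def L (t : ℕ) : List ℕ := (st c t).2.2

lemma L_succ (t : ℕ) : L c (t+1) = L c t ++ [C6.dist (c (L c t)) (A c t)] := rfl

lemma A_succ (t : ℕ) : A c (t+1) = A c t + delta (c (L c t)) (c (L c (t+1))) := rfl
lemma B_succ (t : ℕ) : B c (t+1) = B c t + delta (c (L c t)) (c (L c (t+1))) := rfl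

/-- The two phantom robbers always stay exactly "2 apart". -/
lemma diff (t : ℕ) : A c t - B c t = 2 := by
  induction t with
  | zero => show (c [] + 1) - (c [] - 1) = 2; ring
  | succ t ih => rw [A_succ, B_succ]; rw [show A c t + _ - (B c t + _) = A c t - B c t by ring, ih]

/-- The two phantom robbers are always symmetric about the current probe vertex. -/
lemma sum (t : ℕ) : A c t + B c t = 2 * c (L c t) := by
  induction t with
  | zero => show (c [] + 1) + (c [] - 1) = 2 * c [] ; ring
  | succ t ih =>
    rw [A_succ, B_succ, show A c t + _ + (B c t + _) =
      A c t + B c t + 2 * delta (c (L c t)) (c (L c (t+1))) by ring, ih,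
      (delta_spec (c (L c t)) (c (L c (t+1)))).1]
    ring

lemma B_eq (t : ℕ) : B c t = 2 * c (L c t) - A c t := by
  have := sum c t; linear_combination this

lemma dist_AB (t : ℕ) : C6.dist (c (L c t)) (B c t) = C6.dist (c (L c t)) (A c t) := by
  rw [B_eq]; exact dist_symm_pt _ _

lemma resps_A (t : ℕ) : resps C6 c (A c) t = L c t := by
  induction t with
  | zero => rfl
  | succ t ih => rw [resps, ih, L_succ]

lemma resps_B (t : ℕ) : resps C6 c (B c) t = L c t := by
  induction t with
  | zero => rfl
  | succ t ih => rw [resps, ih, L_succ, dist_AB]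

lemma valid_of_delta (f : ℕ → Fin 6)
    (h : ∀ t, f (t+1) = f t + delta (c (L c t)) (c (L c (t+1)))) : ValidTraj C6 f := by
  intro t
  rcases (delta_spec (c (L c t)) (c (L c (t+1)))).2 with h0 | h1 | h2
  · left; rw [h, h0, add_zero]
  · right; rw [h, h1, SimpleGraph.cycleGraph_adj]
    right; ring
  · right; rw [h, h2, SimpleGraph.cycleGraph_adj]
    left; ring

lemma valid_A : ValidTraj C6 (A c) := valid_of_delta c _ (A_succ c)
lemma valid_B : ValidTraj C6 (B c) := valid_of_delta c _ (B_succ c)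

end C6NL

/-- The 6-cycle `C₆` is not locatable in the robber-locating game. -/
theorem cycleGraph_six_not_locatable : ¬ Locatable (SimpleGraph.cycleGraph 6) := by
  rintro ⟨c, T, h⟩
  obtain ⟨t, -, hu⟩ := h (C6NL.A c) (C6NL.valid_A c)
  have := hu (C6NL.B c) (C6NL.valid_B c) (by rw [C6NL.resps_A, C6NL.resps_B])
  have hd := C6NL.diff c t
  rw [this, sub_self] at hd
  exact absurd hd.symm (by decide)
end
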